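/- ∫_0^∞ ∫_0^∞ x⁵ y³ / (1 + x² + y² + x² y² + x⁴)^4 dx dy = (45 − 8√3 π)/648. -/

import Mathlib

open MeasureTheory Real Filter Topology
set_option maxHeartbeats 1000000
lemma inner_int (x : ℝ) (hx : 0 < x) :
    ∫ y in Set.Ioi (0:ℝ), x ^ 5 * y ^ 3 / (1 + x ^ 2 + y ^ 2 + x ^ 2 * y ^ 2 + x ^ 4) ^ 4
      = x ^ 5 / (12 * (1 + x ^ 2 + x ^ 4) ^ 2 * (1 + x ^ 2) ^ 2) := by
  set F : ℝ → ℝ := fun y =>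
    x ^ 5 * ((1 + x ^ 2 + x ^ 4) / (3 * ((1 + x ^ 2 + x ^ 4) + (1 + x ^ 2) * y ^ 2) ^ 3)
      - 1 / (2 * ((1 + x ^ 2 + x ^ 4) + (1 + x ^ 2) * y ^ 2) ^ 2)) / (2 * (1 + x ^ 2) ^ 2)
    with hF
  have hderiv : ∀ y ∈ Set.Ici (0:ℝ), HasDerivAt F
      (x ^ 5 * y ^ 3 / (1 + x ^ 2 + y ^ 2 + x ^ 2 * y ^ 2 + x ^ 4) ^ 4) y := by
    intro y _
    have hw : (0:ℝ) < (1 + x ^ 2 + x ^ 4) + (1 + x ^ 2) * y ^ 2 := by positivity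
    have h1 : HasDerivAt (fun y : ℝ => (1 + x ^ 2 + x ^ 4) + (1 + x ^ 2) * y ^ 2)
        ((1 + x ^ 2) * (2 * y)) y := by
      simpa using ((hasDerivAt_pow 2 y).const_mul (1 + x ^ 2)).const_add (1 + x ^ 2 + x ^ 4)
    have h2 := (h1.pow 3).const_mul (3:ℝ)
    have h3 := (h1.pow 2).const_mul (2:ℝ)
    have h4 := ((hasDerivAt_const y (1 + x ^ 2 + x ^ 4)).div h2 (by simp only [Pi.pow_apply]; positivity)).sub
      ((hasDerivAt_const y (1:ℝ)).div h3 (by simp only [Pi.pow_apply]; positivity))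
    have h5 := (h4.const_mul (x ^ 5)).div_const (2 * (1 + x ^ 2) ^ 2)
    refine h5.congr_deriv ?_
    have hw' : ((1 + x ^ 2 + x ^ 4) + (1 + x ^ 2) * y ^ 2) ≠ 0 := ne_of_gt hw
    have hd : (1 + x ^ 2 + y ^ 2 + x ^ 2 * y ^ 2 + x ^ 4) ≠ 0 := by positivity
    simp only [Pi.pow_apply]
    field_simp
    ring
  have hpos : ∀ y ∈ Set.Ioi (0:ℝ),
      0 ≤ x ^ 5 * y ^ 3 / (1 + x ^ 2 + y ^ 2 + x ^ 2 * y ^ 2 + x ^ 4) ^ 4 := by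
    intro y hy
    have hy : 0 < y := hy
    positivity
  have hwtop : Tendsto (fun y : ℝ => (1 + x ^ 2 + x ^ 4) + (1 + x ^ 2) * y ^ 2) atTop atTop := by
    apply tendsto_atTop_add_const_left
    exact Tendsto.const_mul_atTop (by positivity) (tendsto_pow_atTop two_ne_zero)
  have htend : Tendsto F atTop (𝓝 0) := by
    have t1 : Tendsto (fun y : ℝ =>
        (1 + x ^ 2 + x ^ 4) / (3 * ((1 + x ^ 2 + x ^ 4) + (1 + x ^ 2) * y ^ 2) ^ 3))
        atTop (𝓝 0) :=
      Tendsto.div_atTop tendsto_const_nhds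
        (Tendsto.const_mul_atTop (by norm_num) ((tendsto_pow_atTop three_ne_zero).comp hwtop))
    have t2 : Tendsto (fun y : ℝ =>
        (1:ℝ) / (2 * ((1 + x ^ 2 + x ^ 4) + (1 + x ^ 2) * y ^ 2) ^ 2)) atTop (𝓝 0) :=
      Tendsto.div_atTop tendsto_const_nhds
        (Tendsto.const_mul_atTop (by norm_num) ((tendsto_pow_atTop two_ne_zero).comp hwtop))
    have h := ((t1.sub t2).const_mul (x ^ 5)).div_const (2 * (1 + x ^ 2) ^ 2)
    rw [show x ^ 5 * ((0:ℝ) - 0) / (2 * (1 + x ^ 2) ^ 2) = 0 from by ring] at h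
    exact h
  rw [integral_Ioi_of_hasDerivAt_of_nonneg' hderiv hpos htend]
  have hA : (0:ℝ) < 1 + x ^ 2 + x ^ 4 := by positivity
  simp only [hF]
  field_simp
  ring

lemma outer_int :
    ∫ x in Set.Ioi (0:ℝ), x ^ 5 / (12 * (1 + x ^ 2 + x ^ 4) ^ 2 * (1 + x ^ 2) ^ 2)
      = (45 - 8 * Real.sqrt 3 * Real.pi) / 648 := by
  have hs3 : (0:ℝ) < Real.sqrt 3 := Real.sqrt_pos.mpr (by norm_num)
  have hs : Real.sqrt 3 ^ 2 = 3 := Real.sq_sqrt (by norm_num)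
  have hderiv : ∀ x ∈ Set.Ici (0:ℝ), HasDerivAt (fun x : ℝ =>
      (-8 * Real.sqrt 3 / 9 * Real.arctan ((2 * x ^ 2 + 1) / Real.sqrt 3)
        - 1 / (2 * (x ^ 4 + x ^ 2 + 1)) - (2 * x ^ 2 + 1) / (6 * (x ^ 4 + x ^ 2 + 1))
        - 1 / (x ^ 2 + 1)) / 24)
      (x ^ 5 / (12 * (1 + x ^ 2 + x ^ 4) ^ 2 * (1 + x ^ 2) ^ 2)) x := by
    intro x _
    have hq0 : (0:ℝ) < x ^ 4 + x ^ 2 + 1 := by positivity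
    have ha' := (((hasDerivAt_pow 2 x).const_mul (2:ℝ)).add_const (1:ℝ)).div_const (Real.sqrt 3)
    have harc := ha'.arctan
    have t1 : HasDerivAt (fun x : ℝ => -8 * Real.sqrt 3 / 9 * Real.arctan ((2 * x ^ 2 + 1) / Real.sqrt 3))
        (-8 * x / (3 * (x ^ 4 + x ^ 2 + 1))) x := by
      refine (harc.const_mul (-8 * Real.sqrt 3 / 9)).congr_deriv ?_
      rw [div_pow, hs]
      field_simp
      ring
    have hq : HasDerivAt (fun x : ℝ => x ^ 4 + x ^ 2 + 1) (4 * x ^ 3 + 2 * x) x := by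
      have := ((hasDerivAt_pow 4 x).add (hasDerivAt_pow 2 x)).add_const (1:ℝ)
      refine this.congr_deriv ?_
      push_cast
      ring
    have t2 := (hasDerivAt_const x (1:ℝ)).div (hq.const_mul (2:ℝ)) (by positivity)
    have t3 := (((hasDerivAt_pow 2 x).const_mul (2:ℝ)).add_const (1:ℝ)).div
      (hq.const_mul (6:ℝ)) (by positivity)
    have t4 := (hasDerivAt_const x (1:ℝ)).div ((hasDerivAt_pow 2 x).add_const (1:ℝ))
      (by positivity)
    have total := (((t1.sub t2).sub t3).sub t4).div_const (24:ℝ)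
    refine total.congr_deriv ?_
    have h1 : (x:ℝ) ^ 2 + 1 ≠ 0 := by positivity
    have h2 : (1:ℝ) + x ^ 2 + x ^ 4 ≠ 0 := by positivity
    have h3 : (1:ℝ) + x ^ 2 ≠ 0 := by positivity
    field_simp
    ring
  have hpos : ∀ x ∈ Set.Ioi (0:ℝ),
      0 ≤ x ^ 5 / (12 * (1 + x ^ 2 + x ^ 4) ^ 2 * (1 + x ^ 2) ^ 2) := by
    intro x hx
    have : 0 < x := hx
    positivity
  have hqt : Tendsto (fun x : ℝ => x ^ 4 + x ^ 2 + 1) atTop atTop := by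
    apply tendsto_atTop_mono (fun x => ?_) tendsto_id
    simp only [id]
    nlinarith [sq_nonneg (x - 1/2), sq_nonneg (x ^ 2), sq_nonneg x]
  have tarc : Tendsto (fun x : ℝ => Real.arctan ((2 * x ^ 2 + 1) / Real.sqrt 3)) atTop
      (𝓝 (π / 2)) := by
    apply (Real.tendsto_arctan_atTop.mono_right nhdsWithin_le_nhds).comp
    apply Tendsto.atTop_div_const hs3
    apply tendsto_atTop_add_const_right
    exact Tendsto.const_mul_atTop two_pos (tendsto_pow_atTop two_ne_zero)
  have t2' : Tendsto (fun x : ℝ => 1 / (2 * (x ^ 4 + x ^ 2 + 1))) atTop (𝓝 0) :=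
    Tendsto.div_atTop tendsto_const_nhds (Tendsto.const_mul_atTop (by norm_num) hqt)
  have t3' : Tendsto (fun x : ℝ => (2 * x ^ 2 + 1) / (6 * (x ^ 4 + x ^ 2 + 1))) atTop (𝓝 0) := by
    apply squeeze_zero' (g := fun x : ℝ => x⁻¹)
    · filter_upwards [eventually_ge_atTop (1:ℝ)] with x hx
      positivity
    · filter_upwards [eventually_ge_atTop (1:ℝ)] with x hx
      have hx0 : (0:ℝ) < x := lt_of_lt_of_le one_pos hx
      rw [inv_eq_one_div, div_le_div_iff₀ (by positivity) hx0]
      nlinarith [sq_nonneg x, sq_nonneg (x^2)]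
    · exact tendsto_inv_atTop_zero
  have t4' : Tendsto (fun x : ℝ => 1 / (x ^ 2 + 1)) atTop (𝓝 0) :=
    Tendsto.div_atTop tendsto_const_nhds
      (tendsto_atTop_add_const_right _ 1 (tendsto_pow_atTop two_ne_zero))
  have htend : Tendsto (fun x : ℝ =>
      (-8 * Real.sqrt 3 / 9 * Real.arctan ((2 * x ^ 2 + 1) / Real.sqrt 3)
        - 1 / (2 * (x ^ 4 + x ^ 2 + 1)) - (2 * x ^ 2 + 1) / (6 * (x ^ 4 + x ^ 2 + 1))
        - 1 / (x ^ 2 + 1)) / 24) atTop (𝓝 (-Real.sqrt 3 * π / 54)) := by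
    have h := ((((tarc.const_mul (-8 * Real.sqrt 3 / 9)).sub t2').sub t3').sub t4').div_const
      (24:ℝ)
    rw [show (-8 * Real.sqrt 3 / 9 * (π / 2) - 0 - 0 - 0) / 24 = -Real.sqrt 3 * π / 54 from by
      ring] at h
    exact h
  rw [integral_Ioi_of_hasDerivAt_of_nonneg' hderiv hpos htend]
  have h6 : Real.arctan ((2 * (0:ℝ) ^ 2 + 1) / Real.sqrt 3) = π / 6 := by
    rw [show (2 * (0:ℝ) ^ 2 + 1) / Real.sqrt 3 = 1 / Real.sqrt 3 from by norm_num,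
      ← Real.tan_pi_div_six]
    exact Real.arctan_tan (by linarith [Real.pi_pos]) (by linarith [Real.pi_pos])
  rw [h6]
  ring

theorem quadrant_integral_17 :
    ∫ x in Set.Ioi (0:ℝ), ∫ y in Set.Ioi (0:ℝ), x ^ 5 * y ^ 3 / (1 + x ^ 2 + y ^ 2 + x ^ 2 * y ^ 2 + x ^ 4) ^ 4 = (45 - 8 * Real.sqrt 3 * Real.pi) / 648 := by
  rw [MeasureTheory.setIntegral_congr_fun measurableSet_Ioi
    (fun x hx => inner_int x hx)]
  exact outer_int
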